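/- arXiv:1710.08755 — 3 statements merged into one kernel-verified Lean document; each statement's English description precedes it below -/
import Mathlib

section
/- Assume sc-FAN: for every c-bar P ⊆ ℕ* and every fan T, there exists N such that P(ᾱN) for every path α in T (where ᾱN is the initial segment of α of length N). Then every pointwise continuous function F : ℕ^ℕ → ℕ is strongly continuous, i.e., for each fan T there exists N such that for all paths α in T and all β ∈ ℕ^ℕ agreeing with α on the first N values, F(α) = F(β). -/
/-- Initial segment of `α` of length `n`. -/
def seg (α : ℕ → ℕ) (n : ℕ) : List ℕ := List.ofFn (fun i : Fin n => α i)

/-- `a` followed by the constant zero sequence. -/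
def zext (a : List ℕ) : ℕ → ℕ := fun i => a.getD i 0

/-- Upward closure under extension. -/
def extU (U : Set (List ℕ)) : Set (List ℕ) := {a | ∃ b ∈ U, b <+: a}

/-- The cover of formal Baire space, generated by η, ζ, ϝ. -/
inductive Cover : List ℕ → Set (List ℕ) → Prop
  | eta {a : List ℕ} {U : Set (List ℕ)} : a ∈ U → Cover a U
  | zeta {a : List ℕ} {U : Set (List ℕ)} (k : ℕ) : Cover a U → Cover (a ++ [k]) U
  | digamma {a : List ℕ} {U : Set (List ℕ)} : (∀ n, Cover (a ++ [n]) U) → Cover a U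

/-- A spread: a decidable tree where every node has a child. -/
def IsSpread (T : Set (List ℕ)) : Prop :=
  (∀ a, a ∈ T ∨ a ∉ T) ∧ (∀ a b : List ℕ, a <+: b → b ∈ T → a ∈ T) ∧
  (∀ a ∈ T, ∃ n, a ++ [n] ∈ T)

/-- A fan: a finitely branching spread. -/
def IsFan (T : Set (List ℕ)) : Prop :=
  IsSpread T ∧ ∀ a ∈ T, ∃ N, ∀ n, a ++ [n] ∈ T → n ≤ N

/-- `α` is a path in the tree `T`. -/
def IsPath (T : Set (List ℕ)) (α : ℕ → ℕ) : Prop := ∀ n, seg α n ∈ T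

/-- A c-bar: a c-set barring every sequence. -/
def IsCBar (P : Set (List ℕ)) : Prop :=
  (∃ δ : List ℕ → ℕ, ∀ a, a ∈ P ↔ ∀ b, δ a = δ (a ++ b)) ∧
  (∀ α : ℕ → ℕ, ∃ n, seg α n ∈ P)

/-- Pointwise continuity for `F : ℕ^ℕ → ℕ`. -/
def PtwiseCts (F : (ℕ → ℕ) → ℕ) : Prop :=
  ∀ α : ℕ → ℕ, ∃ n, ∀ β : ℕ → ℕ, seg β n = seg α n → F β = F α

/-- An inductive subset of ℕ*. -/
def Inductive (Q : Set (List ℕ)) : Prop := ∀ a, (∀ n, a ++ [n] ∈ Q) → a ∈ Q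

/-- Preimage of a subset of ℕ under a relation r ⊆ ℕ* × ℕ. -/
def rInv (r : List ℕ → ℕ → Prop) (D : Set ℕ) : Set (List ℕ) := {a | ∃ n ∈ D, r a n}

/-- Formal topology map from formal Baire space to formal natural numbers. -/
def IsFTopMap (r : List ℕ → ℕ → Prop) : Prop :=
  Cover [] (rInv r Set.univ) ∧
  ∀ n m : ℕ, ∀ a ∈ extU (rInv r {n}) ∩ extU (rInv r {m}),
    Cover a (rInv r {l | l = n ∧ n = m})

/-- `F` is formally continuous: induced by a formal topology map on points. -/
def FormallyCts (F : (ℕ → ℕ) → ℕ) : Prop :=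
  ∃ r : List ℕ → ℕ → Prop, IsFTopMap r ∧
    ∀ α : ℕ → ℕ, {n | ∃ k, r (seg α k) n} = {F α}

/-- The class of Brouwer-operations. -/
inductive IsBrouwerOp : (List ℕ → ℕ) → Prop
  | const (n : ℕ) : IsBrouwerOp (fun _ => n + 1)
  | sup {γ : List ℕ → ℕ} : γ [] = 0 →
      (∀ n, IsBrouwerOp (fun a => γ (n :: a))) → IsBrouwerOp γ

/-- `bar γ`: minimal sequences on which `γ` is positive. -/
def barOf (γ : List ℕ → ℕ) : Set (List ℕ) :=
  {a | 0 < γ a ∧ ∀ b : List ℕ, b <+: a → b ≠ a → γ b = 0}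

/-- The set presentation `Cov` of formal Baire space. -/
inductive Cov : List ℕ → Set (List ℕ) → Prop
  | single (a : List ℕ) : Cov a {a}
  | union {a : List ℕ} {U : ℕ → Set (List ℕ)} :
      (∀ n, Cov (a ++ [n]) (U n)) → Cov a (⋃ n, U n)

lemma seg_length (α : ℕ → ℕ) (n : ℕ) : (seg α n).length = n := by
  simp [seg]

lemma seg_getElem (α : ℕ → ℕ) {n i : ℕ} (h : i < (seg α n).length) :
    (seg α n)[i] = α i := by
  simp [seg]

lemma seg_zext (a : List ℕ) : seg (zext a) a.length = a := by
  apply List.ext_getElem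
  · simp [seg]
  · intro i h1 h2
    rw [seg_getElem]
    simp [zext, List.getD_eq_getElem?_getD, List.getElem?_eq_getElem h2]

lemma seg_take (α : ℕ → ℕ) {m n : ℕ} (h : m ≤ n) : (seg α n).take m = seg α m := by
  apply List.ext_getElem
  · simp [seg, Nat.min_eq_left, h]
  · intro i h1 h2
    rw [List.getElem_take, seg_getElem, seg_getElem]

theorem scFAN_implies_SC
    (hscFAN : ∀ P : Set (List ℕ), IsCBar P → ∀ T : Set (List ℕ), IsFan T →
      ∃ N, ∀ α : ℕ → ℕ, IsPath T α → seg α N ∈ P)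
    (F : (ℕ → ℕ) → ℕ) (hF : PtwiseCts F) :
    ∀ T : Set (List ℕ), IsFan T → ∃ N, ∀ α : ℕ → ℕ, IsPath T α →
      ∀ β : ℕ → ℕ, seg α N = seg β N → F α = F β := by
  classical
  set P : Set (List ℕ) := {a | ∀ β : ℕ → ℕ, seg β a.length = a → F β = F (zext a)}
    with hP
  have hmono : ∀ a (n : ℕ), a ∈ P → a ++ [n] ∈ P := by
    intro a n ha β hβ
    have hlen : (a ++ [n]).length = a.length + 1 := by simp
    have hle : a.length ≤ (a ++ [n]).length := by simp
    have hβ' : seg β a.length = a := by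
      rw [← seg_take β hle, hβ]
      simpa using List.take_left a [n]
    have hz : seg (zext (a ++ [n])) a.length = a := by
      rw [← seg_take (zext (a ++ [n])) hle, seg_zext]
      simpa using List.take_left a [n]
    calc F β = F (zext a) := ha β hβ'
      _ = F (zext (a ++ [n])) := (ha _ hz).symm
  have hmono' : ∀ a b, a ∈ P → a ++ b ∈ P := by
    intro a b ha
    induction b using List.reverseRecOn with
    | nil => simpa using ha
    | append_singleton c n ih =>
        have := hmono (a ++ c) n ih
        simpa [List.append_assoc] using this
  have hcbar : IsCBar P := by
    constructor
    · refine ⟨fun a => if a ∈ P then 0 else a.length + 1, ?_⟩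
      intro a
      constructor
      · intro ha b
        simp [ha, hmono' a b ha]
      · intro h
        by_contra hna
        have h0 := h [0]
        by_cases h1 : a ++ [0] ∈ P
        · simp [hna, h1] at h0
        · simp [hna, h1] at h0
    · intro α
      obtain ⟨n, hn⟩ := hF α
      refine ⟨n, ?_⟩
      intro β hβ
      rw [seg_length] at hβ
      have h1 : F β = F α := hn β hβ
      have h2 : F (zext (seg α n)) = F α := by
        apply hn
        have := seg_zext (seg α n)
        rwa [seg_length] at this
      rw [h1, h2]
  intro T hT
  obtain ⟨N, hN⟩ := hscFAN P hcbar T hT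
  refine ⟨N, ?_⟩
  intro α hα β hβ
  have hαP := hN α hα
  have h1 : F α = F (zext (seg α N)) := by
    apply hαP
    rw [seg_length]
  have h2 : F β = F (zext (seg α N)) := by
    apply hαP
    rw [seg_length]
    exact hβ.symm
  rw [h1, h2]
end

section
/- Given a c-bar P ⊆ ℕ* with witness function δ : ℕ* → ℕ (so that P(a) holds iff δ(a) = δ(a⌢b) for all b), the function F : ℕ^ℕ → ℕ defined by F(α) = max({ n ∈ ℕ | δ(ᾱn) ≠ δ(ᾱ(n+1)) } ∪ {1}) is a well-defined, pointwise continuous function. -/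
lemma seg_succ (α : ℕ → ℕ) (n : ℕ) : seg α (n+1) = seg α n ++ [α n] := by
  rw [seg, List.ofFn_succ']
  simp [List.concat_eq_append, seg]

lemma seg_prefix (α : ℕ → ℕ) {m n : ℕ} (h : m ≤ n) : seg α m <+: seg α n := by
  induction n with
  | zero => simp [show m = 0 by omega]
  | succ n ih =>
    rcases Nat.lt_or_ge m (n+1) with h'|h'
    · exact (ih (by omega)).trans ⟨[α n], (seg_succ α n).symm⟩
    · have : m = n+1 := by omega
      subst this; exact List.prefix_refl _

lemma seg_eq_of_seg_eq {α β : ℕ → ℕ} {m n : ℕ} (h : seg β m = seg α m) (hn : n ≤ m) :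
    seg β n = seg α n := by
  have hβ := seg_prefix β hn
  have hα := seg_prefix α hn
  rw [h] at hβ
  have l : (seg β n).length = (seg α n).length := by simp [seg]
  exact (List.prefix_of_prefix_length_le hβ hα l.le).eq_of_length l

theorem cbar_function_wellDefined_ptwiseCts
    (P : Set (List ℕ)) (δ : List ℕ → ℕ)
    (hP : ∀ a, a ∈ P ↔ ∀ b, δ a = δ (a ++ b))
    (hbar : ∀ α : ℕ → ℕ, ∃ n, seg α n ∈ P) :
    ∃ F : (ℕ → ℕ) → ℕ,
      (∀ α : ℕ → ℕ,
        IsGreatest ({n | δ (seg α n) ≠ δ (seg α (n + 1))} ∪ {1}) (F α)) ∧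
      PtwiseCts F := by
  set S : (ℕ → ℕ) → Set ℕ :=
    fun α => {n | δ (seg α n) ≠ δ (seg α (n + 1))} ∪ {1} with hS
  have const : ∀ (α : ℕ → ℕ) (m : ℕ), seg α m ∈ P → ∀ n, m ≤ n →
      δ (seg α n) = δ (seg α m) := by
    intro α m hm n hn
    obtain ⟨b, hb⟩ := seg_prefix α hn
    rw [← hb, ← (hP _).1 hm b]
  have bdd : ∀ (α : ℕ → ℕ) (m : ℕ), seg α m ∈ P → ∀ n ∈ S α, n ≤ m + 1 := by
    intro α m hm n hn
    rcases hn with hn | hn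
    · by_contra hc
      exact hn ((const α m hm n (by omega)).trans (const α m hm (n+1) (by omega)).symm)
    · simp_all
  have hne : ∀ α, (S α).Nonempty := fun α => ⟨1, Or.inr rfl⟩
  have hbdd : ∀ α, BddAbove (S α) := by
    intro α
    obtain ⟨m, hm⟩ := hbar α
    exact ⟨m + 1, fun n hn => bdd α m hm n hn⟩
  refine ⟨fun α => sSup (S α), fun α => ⟨Nat.sSup_mem (hne α) (hbdd α),
    fun n hn => le_csSup (hbdd α) hn⟩, ?_⟩
  intro α
  obtain ⟨m, hm⟩ := hbar α
  refine ⟨m, fun β hβ => ?_⟩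
  have hβm : seg β m ∈ P := hβ ▸ hm
  have : S β = S α := by
    ext n
    rcases Nat.lt_or_ge n m with h | h
    · have e1 : seg β n = seg α n := seg_eq_of_seg_eq hβ (by omega)
      have e2 : seg β (n+1) = seg α (n+1) := seg_eq_of_seg_eq hβ (by omega)
      simp [hS, e1, e2]
    · have c1 := (const β m hβm n h).trans (const β m hβm (n+1) (by omega)).symm
      have c2 := (const α m hm n h).trans (const α m hm (n+1) (by omega)).symm
      simp [hS, c1, c2]
  simp [this]
end

section
/- Let Cov be the collection of pairs (a, U) inductively defined by: {a} ∈ Cov(a) for every a ∈ ℕ*; and if U_n ∈ Cov(a⌢⟨n⟩) for all n ∈ ℕ, then ⋃_n U_n ∈ Cov(a). Then (assuming countable choice) for all a ∈ ℕ* and U ⊆ ℕ*: a ◁ U in formal Baire space if and only if there exists V ∈ Cov(a) with V ⊆ ext(U). -/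
lemma extU_mono {U V : Set (List ℕ)} (h : U ⊆ V) : extU U ⊆ extU V :=
  fun _ ⟨b, hb, hp⟩ => ⟨b, h hb, hp⟩

lemma extU_extU {U : Set (List ℕ)} : extU (extU U) ⊆ extU U := by
  rintro a ⟨b, ⟨c, hc, hcb⟩, hba⟩
  exact ⟨c, hc, hcb.trans hba⟩

lemma cov_snoc {a : List ℕ} {V : Set (List ℕ)} (h : Cov a V) (k : ℕ) :
    ∃ V', Cov (a ++ [k]) V' ∧ V' ⊆ extU V := by
  induction h with
  | single a => exact ⟨{a ++ [k]}, Cov.single _, by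
      rintro x rfl; exact ⟨a, rfl, ⟨[k], rfl⟩⟩⟩
  | @union a U h ih =>
    exact ⟨U k, h k, fun x hx => ⟨x, Set.mem_iUnion.2 ⟨k, hx⟩, List.prefix_refl x⟩⟩

lemma cover_of_prefix {b a : List ℕ} {U : Set (List ℕ)} (hb : b ∈ U) (h : b <+: a) :
    Cover a U := by
  obtain ⟨t, rfl⟩ := h
  induction t using List.reverseRecOn with
  | nil => simpa using Cover.eta hb
  | append_singleton s k ih =>
    rw [← List.append_assoc]
    exact Cover.zeta k ih

theorem cov_presents_formal_baire (a : List ℕ) (U : Set (List ℕ)) :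
    Cover a U ↔ ∃ V : Set (List ℕ), Cov a V ∧ V ⊆ extU U := by
  constructor
  · intro h
    induction h with
    | @eta a U ha =>
      exact ⟨{a}, Cov.single a, by rintro x rfl; exact ⟨x, ha, List.prefix_refl x⟩⟩
    | @zeta a U k _ ih =>
      obtain ⟨V, hV, hVU⟩ := ih
      obtain ⟨V', hV', hV'V⟩ := cov_snoc hV k
      exact ⟨V', hV', fun x hx => extU_extU (extU_mono hVU (hV'V hx))⟩
    | @digamma a U _ ih =>
      choose V hV hVU using ih
      exact ⟨⋃ n, V n, Cov.union hV, Set.iUnion_subset hVU⟩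
  · rintro ⟨V, hV, hVU⟩
    induction hV with
    | single a =>
      obtain ⟨b, hb, hba⟩ := hVU rfl
      exact cover_of_prefix hb hba
    | @union a W h ih =>
      exact Cover.digamma fun n => ih n fun x hx => hVU (Set.mem_iUnion.2 ⟨n, hx⟩)
end
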